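/- arXiv:math/0607570 — 3 statements merged into one kernel-verified Lean document; each statement's English description precedes it below -/
import Mathlib

section
/- Let R = (T^0, …, T^{2m-1}) be a symmetric cycle of {-,+}-sign vectors on E_m (consecutive vectors differ in exactly one coordinate and T^{k+m} = -T^k). Let M := max⁺(V(R)) be the set of those T^k whose positive part is inclusion-maximal in {(T^j)⁺ : j}. Then for every e ∈ E_m, |{T ∈ M : T(e) = +}| = ⌈|M|/2⌉. -/
/-- Sign vectors with no zero components on `Fin m`, encoded as Boolean vectors
(`true` is `+`, `false` is `-`). -/
abbrev SV (m : ℕ) := Fin m → Bool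

/-- The positive part of a sign vector. -/
def posPart {m : ℕ} (X : SV m) : Finset (Fin m) :=
  Finset.univ.filter (fun e => X e = true)

/-- The separation set of two sign vectors (no zero components). -/
def sep {m : ℕ} (X Y : SV m) : Finset (Fin m) :=
  Finset.univ.filter (fun e => X e ≠ Y e)

/-- A finite set of sign vectors is a committee if for every coordinate `e`,
strictly more than half of its elements have a `+` at `e`. -/
def isCommitteeB {m : ℕ} (K : Finset (SV m)) : Prop :=
  ∀ e : Fin m, (K.card : ℚ) / 2 < ((K.filter (fun X => X e = true)).card : ℚ)

/-- The elements of a family whose positive parts are inclusion-maximal. -/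
def maxPlus {m : ℕ} (V : Finset (SV m)) : Finset (SV m) :=
  V.filter (fun X => ∀ Y ∈ V, ¬ _root_.posPart X ⊂ _root_.posPart Y)

lemma memPos {m : ℕ} (X : SV m) (x : Fin m) : x ∈ _root_.posPart X ↔ X x = true := by
  unfold _root_.posPart
  simp

/-- A symmetric cycle with its flip data. -/
structure Cyc (m : ℕ) where
  T : ℕ → SV m
  eps : ℕ → Fin m
  d : ℕ → Bool
  hm : 0 < m
  hflip : ∀ k, T k (eps k) = ! d k
  hstep1 : ∀ k, T (k+1) (eps k) = d k
  hsame : ∀ k x, x ≠ eps k → T (k+1) x = T k x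
  hepsm : ∀ k, eps (k+m) = eps k
  hdm : ∀ k, d (k+m) = ! d k
  hTm : ∀ k x, T (k+m) x = ! T k x

namespace Cyc
variable {m : ℕ} (C : Cyc m)

lemma T2m (k : ℕ) (x : Fin m) : C.T (k + 2*m) x = C.T k x := by
  have h : k + 2*m = k + m + m := by ring
  rw [h, C.hTm, C.hTm, Bool.not_not]

lemma Tper (c : ℕ) : ∀ k x, C.T (k + 2*m*c) x = C.T k x := by
  induction c with
  | zero => intro k x; simp
  | succ n ih =>
      intro k x
      have h : k + 2*m*(n+1) = (k + 2*m*n) + 2*m := by ring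
      rw [h, C.T2m, ih]

lemma d2m (k : ℕ) : C.d (k + 2*m) = C.d k := by
  have h : k + 2*m = k + m + m := by ring
  rw [h, C.hdm, C.hdm, Bool.not_not]

lemma Tmod (n : ℕ) (x : Fin m) : C.T (n % (2*m)) x = C.T n x := by
  conv_rhs => rw [← Nat.mod_add_div n (2*m)]
  exact (C.Tper (n / (2*m)) (n % (2*m)) x).symm

lemma const (x : Fin m) (a : ℕ) : ∀ n, (∀ l, a ≤ l → l < a + n → C.eps l ≠ x) →
    C.T (a+n) x = C.T a x := by
  intro n
  induction n with
  | zero => intro _; rfl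
  | succ n ih =>
      intro h
      have h1 : C.T (a+n+1) x = C.T (a+n) x :=
        C.hsame (a+n) x (Ne.symm (h (a+n) (by omega) (by omega)))
      have h2 : a + (n+1) = a + n + 1 := by ring
      rw [h2, h1, ih (fun l hl1 hl2 => h l hl1 (by omega))]

lemma surjWin (a : ℕ) (x : Fin m) : ∃ l, a ≤ l ∧ l < a + m ∧ C.eps l = x := by
  by_contra hc
  push_neg at hc
  have h := C.const x a m (fun l h1 h2 => hc l h1 h2)
  rw [C.hTm a x] at h
  cases hx : C.T a x <;> simp [hx] at h

lemma injWin (a i l : ℕ) (h1 : a ≤ i) (h2 : i < l) (h3 : l < a + m) :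
    C.eps i ≠ C.eps l := by
  have hsub : (Finset.univ : Finset (Fin m)) ⊆ (Finset.Ico a (a+m)).image C.eps := by
    intro x _
    obtain ⟨l', hl1, hl2, hl3⟩ := C.surjWin a x
    exact Finset.mem_image.mpr ⟨l', Finset.mem_Ico.mpr ⟨hl1, hl2⟩, hl3⟩
  have hcard : ((Finset.Ico a (a+m)).image C.eps).card = (Finset.Ico a (a+m)).card := by
    have h4 : ((Finset.Ico a (a+m)).image C.eps).card ≤ (Finset.Ico a (a+m)).card :=
      Finset.card_image_le
    have h5 : m ≤ ((Finset.Ico a (a+m)).image C.eps).card := by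
      calc m = (Finset.univ : Finset (Fin m)).card := by simp
        _ ≤ _ := Finset.card_le_card hsub
    have h6 : (Finset.Ico a (a+m)).card = m := by simp
    omega
  have hinj := Finset.card_image_iff.mp hcard
  intro he
  have := hinj (by simp [Finset.mem_Ico]; omega) (by simp [Finset.mem_Ico]; omega) he
  omega

lemma val1 (i t : ℕ) (ht : t < m) : C.T (i + 1 + t) (C.eps i) = C.d i := by
  have h := C.const (C.eps i) (i+1) t
    (fun l h1 h2 => Ne.symm (C.injWin i i l (le_refl i) (by omega) (by omega)))
  rw [h, C.hstep1]

lemma val2 (j s : ℕ) (hs : s < m) : C.T j (C.eps (j + s)) = ! C.d (j + s) := by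
  have h := C.const (C.eps (j+s)) j s
    (fun l h1 h2 => C.injWin j l (j+s) h1 (by omega) (by omega))
  rw [← h, C.hflip]

lemma Tinj (a t : ℕ) (h1 : 1 ≤ t) (h2 : t < 2*m) : C.T a ≠ C.T (a + t) := by
  intro he
  by_cases hc : t ≤ m
  · have hx1 : C.T a (C.eps a) = ! C.d a := C.hflip a
    have hx2 : C.T (a + t) (C.eps a) = C.d a := by
      have h : a + t = a + 1 + (t - 1) := by omega
      rw [h]; exact C.val1 a (t-1) (by omega)
    rw [he, hx2] at hx1
    cases C.d a <;> simp_all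
  · have hm := C.hm
    have hx1 : C.T a (C.eps (a + (t - m))) = ! C.d (a + (t - m)) := C.val2 a (t-m) (by omega)
    have hx2 : C.T (a + t) (C.eps (a + (t - m))) = C.d (a + (t - m)) := by
      have h : a + t = (a + (t - m)) + 1 + (m - 1) := by omega
      rw [h]; exact C.val1 (a + (t-m)) (m-1) (by omega)
    rw [he, hx2] at hx1
    cases C.d (a + (t - m)) <;> simp_all

lemma lemA (k t : ℕ) (ht : t < m) (hsub : _root_.posPart (C.T k) ⊆ _root_.posPart (C.T (k + 1 + t))) :
    C.d k = true := by
  by_contra hc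
  have hdk : C.d k = false := by cases h : C.d k <;> simp_all
  have h1 : C.eps k ∈ _root_.posPart (C.T k) := by
    rw [memPos, C.hflip, hdk]; rfl
  have h2 := hsub h1
  rw [memPos, C.val1 k t ht, hdk] at h2
  exact absurd h2 (by simp)

lemma lemB (j s : ℕ) (hs : s < m) (hsub : _root_.posPart (C.T (j + s + 1)) ⊆ _root_.posPart (C.T j)) :
    C.d (j + s) = false := by
  by_contra hc
  have hd : C.d (j+s) = true := by cases h : C.d (j+s) <;> simp_all
  have h1 : C.eps (j+s) ∈ _root_.posPart (C.T (j+s+1)) := by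
    rw [memPos, C.hstep1]; exact hd
  have h2 := hsub h1
  rw [memPos, C.val2 j s hs, hd] at h2
  exact absurd h2 (by simp)

lemma lemC (k : ℕ) (hd : C.d k = true) : _root_.posPart (C.T k) ⊂ _root_.posPart (C.T (k+1)) := by
  rw [Finset.ssubset_def]
  constructor
  · intro x hx
    rw [memPos] at hx
    by_cases hx2 : x = C.eps k
    · subst hx2; rw [C.hflip, hd] at hx; exact absurd hx (by simp)
    · rw [memPos, C.hsame k x hx2]; exact hx
  · intro hsub
    have h1 : C.eps k ∈ _root_.posPart (C.T (k+1)) := by rw [memPos, C.hstep1]; exact hd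
    have h2 := hsub h1
    rw [memPos, C.hflip, hd] at h2
    exact absurd h2 (by simp)

lemma lemD (k : ℕ) (hd : C.d k = false) : _root_.posPart (C.T (k+1)) ⊂ _root_.posPart (C.T k) := by
  rw [Finset.ssubset_def]
  constructor
  · intro x hx
    rw [memPos] at hx
    by_cases hx2 : x = C.eps k
    · subst hx2; rw [C.hstep1, hd] at hx; exact absurd hx (by simp)
    · rw [memPos, ← C.hsame k x hx2]; exact hx
  · intro hsub
    have h1 : C.eps k ∈ _root_.posPart (C.T k) := by rw [memPos, C.hflip, hd]; rfl
    have h2 := hsub h1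
    rw [memPos, C.hstep1, hd] at h2
    exact absurd h2 (by simp)

lemma hexist {m : ℕ} (hm : 0 < m) (a j : ℕ) (hj : j < 2*m) : ∃ t q, t < 2*m ∧ a + t = j + 2*m*q := by
  have key1 : ∀ b r jj : ℕ, r ≤ jj → (b + r) + (jj - r) = jj + b := by intro b r jj h; omega
  have key2 : ∀ b r jj c : ℕ, jj < r → r < c → (b + r) + (c + jj - r) = jj + (b + c) := by
    intro b r jj c hh1 hh2; omega
  have h1 : 2*m*(a / (2*m)) + a % (2*m) = a := by
    rw [Nat.add_comm]; exact Nat.mod_add_div a (2*m)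
  have h2 : a % (2*m) < 2*m := Nat.mod_lt _ (by omega)
  by_cases hc : a % (2*m) ≤ j
  · refine ⟨j - a % (2*m), a / (2*m), by omega, ?_⟩
    calc a + (j - a % (2*m)) = (2*m*(a/(2*m)) + a % (2*m)) + (j - a % (2*m)) := by rw [h1]
      _ = j + 2*m*(a/(2*m)) := key1 _ _ _ hc
  · refine ⟨2*m + j - a % (2*m), a / (2*m) + 1, by omega, ?_⟩
    calc a + (2*m + j - a % (2*m))
        = (2*m*(a/(2*m)) + a % (2*m)) + (2*m + j - a % (2*m)) := by rw [h1]
      _ = j + (2*m*(a/(2*m)) + (2*m)) := by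
            have h3 : 2*m + j - a % (2*m) = (2*m) + j - a % (2*m) := rfl
            exact key2 _ _ _ _ (by omega) (by omega)
      _ = j + 2*m*(a/(2*m) + 1) := by ring

lemma maxOfDesc (k : ℕ) (hd1 : C.d k = true) (hd2 : C.d (k+1) = false) :
    ∀ j, ¬ _root_.posPart (C.T (k+1)) ⊂ _root_.posPart (C.T j) := by
  intro j hss
  have hm := C.hm
  obtain ⟨t, q, ht, heq⟩ := hexist C.hm (k+1) (j % (2*m)) (Nat.mod_lt _ (by omega))
  have hTfun : C.T (k+1+t) = C.T j := by
    funext x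
    rw [heq, C.Tper q (j % (2*m)) x, C.Tmod]
  rw [← hTfun] at hss
  rcases Nat.eq_zero_or_pos t with h0 | hpos
  · subst h0
    simp only [Nat.add_zero] at hss
    rw [Finset.ssubset_def] at hss
    exact hss.2 hss.1
  by_cases hc : t ≤ m
  · have hA := C.lemA (k+1) (t-1) (by omega)
      (by rw [show k+1+1+(t-1) = k+1+t from by omega]; exact hss.subset)
    rw [hA] at hd2; exact Bool.noConfusion hd2
  · have hs : 2*m - t - 1 < m := by omega
    have hposeq : _root_.posPart (C.T ((k+1+t) + (2*m - t - 1) + 1)) = _root_.posPart (C.T (k+1)) := by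
      rw [show (k+1+t) + (2*m - t - 1) + 1 = (k+1) + 2*m from by omega]
      congr 1
      funext x
      exact C.T2m (k+1) x
    have hB := C.lemB (k+1+t) (2*m - t - 1) hs (by rw [hposeq]; exact hss.subset)
    rw [show (k+1+t) + (2*m - t - 1) = k + 2*m from by omega, C.d2m] at hB
    rw [hB] at hd1; exact Bool.noConfusion hd1

lemma descOfMax (k : ℕ) (h : ∀ j, ¬ _root_.posPart (C.T (k+1)) ⊂ _root_.posPart (C.T j)) :
    C.d k = true ∧ C.d (k+1) = false := by
  constructor
  · by_contra hc
    have hdk : C.d k = false := by cases hh : C.d k <;> simp_all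
    exact h k (C.lemD k hdk)
  · by_contra hc
    have hdk : C.d (k+1) = true := by cases hh : C.d (k+1) <;> simp_all
    exact h (k+2) (C.lemC (k+1) hdk)

end Cyc

def dsc (d : ℕ → Bool) (a b : ℕ) : ℕ :=
  ((Finset.Ico a b).filter (fun k => d k = true ∧ d (k+1) = false)).card

def asc (d : ℕ → Bool) (a b : ℕ) : ℕ :=
  ((Finset.Ico a b).filter (fun k => d k = false ∧ d (k+1) = true)).card

lemma ico_succ (a n : ℕ) : Finset.Ico a (a+(n+1)) = insert (a+n) (Finset.Ico a (a+n)) := by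
  ext x; simp [Finset.mem_Ico]; omega

lemma dsc_asc (d : ℕ → Bool) (a : ℕ) : ∀ n,
    dsc d a (a+n) + (if d (a+n) = true then 1 else 0)
      = asc d a (a+n) + (if d a = true then 1 else 0) := by
  intro n
  induction n with
  | zero => simp [dsc, asc]
  | succ n ih =>
      have hnot1 : (a+n) ∉ (Finset.Ico a (a+n)).filter (fun k => d k = true ∧ d (k+1) = false) := by
        simp
      have hnot2 : (a+n) ∉ (Finset.Ico a (a+n)).filter (fun k => d k = false ∧ d (k+1) = true) := by
        simp
      unfold dsc asc at ih ⊢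
      rw [ico_succ, Finset.filter_insert, Finset.filter_insert]
      simp only [show a+(n+1) = a+n+1 from by ring]
      rcases Bool.eq_false_or_eq_true (d (a+n)) with h1 | h1 <;>
        rcases Bool.eq_false_or_eq_true (d (a+n+1)) with h2 | h2 <;>
        · simp (config := { failIfUnchanged := false }) [h1, h2,
            Finset.card_insert_of_notMem hnot1, Finset.card_insert_of_notMem hnot2] at ih ⊢
          omega

theorem stmt_7 {m : ℕ} (hm : 0 < m) (T : ℕ → SV m)
    (hsym : ∀ k, T (k + m) = fun e => ! T k e)
    (hstep : ∀ k, (sep (T k) (T (k + 1))).card = 1) :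
    ∀ e : Fin m,
      ((maxPlus ((Finset.range (2 * m)).image T)).filter
          (fun X => X e = true)).card =
        ((maxPlus ((Finset.range (2 * m)).image T)).card + 1) / 2 := by
  -- set up the flip data
  have hone : ∀ k, ∃ a, sep (T k) (T (k+1)) = {a} := fun k => Finset.card_eq_one.mp (hstep k)
  choose ε hε using hone
  have hsep : ∀ k x, T k x ≠ T (k+1) x ↔ x = ε k := by
    intro k x
    constructor
    · intro h
      have hx : x ∈ sep (T k) (T (k+1)) := by
        unfold sep; simp [h]
      rw [hε k] at hx; simpa using hx
    · intro h; subst h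
      have hx : ε k ∈ sep (T k) (T (k+1)) := by rw [hε k]; simp
      unfold sep at hx; simpa using hx
  have hflip : ∀ k, T k (ε k) = ! T (k+1) (ε k) := by
    intro k
    have h := (hsep k (ε k)).mpr rfl
    cases h2 : T (k+1) (ε k) <;> cases h3 : T k (ε k) <;> simp_all
  have hsame : ∀ k x, x ≠ ε k → T (k+1) x = T k x := by
    intro k x hx
    by_contra h
    exact hx ((hsep k x).mp (fun he => h he.symm))
  have hTm : ∀ k x, T (k+m) x = ! T k x := fun k x => by rw [hsym k]
  have hεm : ∀ k, ε (k+m) = ε k := by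
    intro k
    apply ((hsep (k+m) (ε k)).mp ?_).symm
    rw [hTm k, show k+m+1 = (k+1)+m from by omega, hTm (k+1)]
    have h := (hsep k (ε k)).mpr rfl
    cases h2 : T (k+1) (ε k) <;> cases h3 : T k (ε k) <;> simp_all
  have hdm : ∀ k, T (k+m+1) (ε (k+m)) = ! T (k+1) (ε k) := by
    intro k
    rw [hεm, show k+m+1 = (k+1)+m from by omega, hTm]
  let C : Cyc m :=
    ⟨T, ε, fun k => T (k+1) (ε k), hm,
     hflip, fun k => rfl, hsame, hεm, hdm, hTm⟩
  have hCT : C.T = T := rfl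
  intro e
  -- maximality characterization
  have hMelem : ∀ X, X ∈ maxPlus ((Finset.range (2*m)).image T) ↔
      ((∃ j, j < 2*m ∧ T j = X) ∧ ∀ j, ¬ _root_.posPart X ⊂ _root_.posPart (T j)) := by
    intro X
    unfold maxPlus
    rw [Finset.mem_filter]
    constructor
    · rintro ⟨hX, hmax⟩
      obtain ⟨j, hj, hTj⟩ := Finset.mem_image.mp hX
      rw [Finset.mem_range] at hj
      refine ⟨⟨j, hj, hTj⟩, fun j' hss => ?_⟩
      have hmem : T (j' % (2*m)) ∈ (Finset.range (2*m)).image T :=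
        Finset.mem_image.mpr ⟨j' % (2*m), Finset.mem_range.mpr (Nat.mod_lt _ (by omega)), rfl⟩
      apply hmax _ hmem
      have hTT : T (j' % (2*m)) = T j' := funext (C.Tmod j')
      rw [hTT]
      exact hss
    · rintro ⟨⟨j, hj, hTj⟩, hmax⟩
      refine ⟨Finset.mem_image.mpr ⟨j, Finset.mem_range.mpr hj, hTj⟩, ?_⟩
      rintro Y hY hss
      obtain ⟨j', hj', hTj'⟩ := Finset.mem_image.mp hY
      exact hmax j' (hTj' ▸ hss)
  have hchar : ∀ k, T (k+1) ∈ maxPlus ((Finset.range (2*m)).image T) ↔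
      (C.d k = true ∧ C.d (k+1) = false) := by
    intro k
    rw [hMelem]
    constructor
    · rintro ⟨_, hmax⟩; exact C.descOfMax k hmax
    · rintro ⟨h1, h2⟩
      exact ⟨⟨(k+1) % (2*m), Nat.mod_lt _ (by omega), funext (C.Tmod (k+1))⟩,
        C.maxOfDesc k h1 h2⟩
  -- find the base position p for coordinate e
  obtain ⟨q0, _, hq2, hq3⟩ := C.surjWin 0 e
  obtain ⟨p, hp1, hp2⟩ : ∃ p, C.eps p = e ∧ C.d p = true := by
    by_cases hdq : C.d q0 = true
    · exact ⟨q0, hq3, hdq⟩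
    · refine ⟨q0 + m, ?_, ?_⟩
      · rw [show C.eps (q0+m) = C.eps q0 from C.hepsm q0, hq3]
      · rw [C.hdm]; cases h : C.d q0 <;> simp_all
  have hdpm : C.d (p+m) = false := by rw [C.hdm, hp2]; rfl
  -- first bijection : all maximal vectors
  have hcard1 : dsc C.d p (p+2*m) = (maxPlus ((Finset.range (2*m)).image T)).card := by
    unfold dsc
    apply Finset.card_bij (fun k _ => T (k+1))
    · intro k hk
      rw [Finset.mem_filter] at hk
      exact (hchar k).mpr hk.2
    · intro k1 hk1 k2 hk2 hT
      rw [Finset.mem_filter, Finset.mem_Ico] at hk1 hk2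
      by_contra hne
      rcases Nat.lt_or_ge k1 k2 with hlt | hge
      · exact C.Tinj (k1+1) (k2-k1) (by omega) (by omega)
          (by rw [show k1+1+(k2-k1) = k2+1 from by omega]; exact hT)
      · exact C.Tinj (k2+1) (k1-k2) (by omega) (by omega)
          (by rw [show k2+1+(k1-k2) = k1+1 from by omega]; exact hT.symm)
    · intro X hX
      obtain ⟨⟨j, hj, hTj⟩, hmax⟩ := (hMelem X).mp hX
      obtain ⟨t, q, ht, heq⟩ := Cyc.hexist hm (p+1) j hj
      have hTeq : T (p + t + 1) = X := by
        funext x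
        have hper : T (j + 2*m*q) x = T j x := C.Tper q j x
        rw [show p + t + 1 = j + 2*m*q from by omega, hper, hTj]
      refine ⟨p + t, ?_, hTeq⟩
      rw [Finset.mem_filter, Finset.mem_Ico]
      refine ⟨⟨by omega, by omega⟩, ?_⟩
      apply C.descOfMax (p+t)
      intro j' hss
      rw [show C.T (p+t+1) = X from hTeq] at hss
      exact hmax j' hss
  -- second bijection : maximal vectors positive at e
  have hcard2 : dsc C.d p (p+m) =
      ((maxPlus ((Finset.range (2*m)).image T)).filter (fun X => X e = true)).card := by
    unfold dsc
    apply Finset.card_bij (fun k _ => T (k+1))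
    · intro k hk
      rw [Finset.mem_filter, Finset.mem_Ico] at hk
      rw [Finset.mem_filter]
      refine ⟨(hchar k).mpr hk.2, ?_⟩
      have hv : T (k+1) (C.eps p) = C.d p := by
        rw [show k+1 = p+1+(k-p) from by omega]
        exact C.val1 p (k-p) (by omega)
      rw [hp1, hp2] at hv
      exact hv
    · intro k1 hk1 k2 hk2 hT
      rw [Finset.mem_filter, Finset.mem_Ico] at hk1 hk2
      by_contra hne
      rcases Nat.lt_or_ge k1 k2 with hlt | hge
      · exact C.Tinj (k1+1) (k2-k1) (by omega) (by omega)
          (by rw [show k1+1+(k2-k1) = k2+1 from by omega]; exact hT)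
      · exact C.Tinj (k2+1) (k1-k2) (by omega) (by omega)
          (by rw [show k2+1+(k1-k2) = k1+1 from by omega]; exact hT.symm)
    · intro X hX
      rw [Finset.mem_filter] at hX
      obtain ⟨hX1, hXe⟩ := hX
      obtain ⟨⟨j, hj, hTj⟩, hmax⟩ := (hMelem X).mp hX1
      obtain ⟨t, q, ht, heq⟩ := Cyc.hexist hm (p+1) j hj
      have hTeq : T (p + t + 1) = X := by
        funext x
        have hper : T (j + 2*m*q) x = T j x := C.Tper q j x
        rw [show p + t + 1 = j + 2*m*q from by omega, hper, hTj]
      have htm : t < m := by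
        by_contra hc
        have hv : T (p+t+1) (C.eps (p+m)) = C.d (p+m) := by
          rw [show p+t+1 = (p+m)+1+(t-m) from by omega]
          exact C.val1 (p+m) (t-m) (by omega)
        rw [C.hepsm, hp1, hdpm, hTeq, hXe] at hv
        exact Bool.noConfusion hv
      refine ⟨p + t, ?_, hTeq⟩
      rw [Finset.mem_filter, Finset.mem_Ico]
      refine ⟨⟨by omega, by omega⟩, ?_⟩
      apply C.descOfMax (p+t)
      intro j' hss
      rw [show C.T (p+t+1) = X from hTeq] at hss
      exact hmax j' hss
  -- splitting and the antipodal bijection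
  have hsplit : dsc C.d p (p + 2*m) = dsc C.d p (p+m) + dsc C.d (p+m) (p+2*m) := by
    clear hcard1 hcard2
    unfold dsc
    rw [← Finset.Ico_union_Ico_eq_Ico (by omega : p ≤ p+m) (by omega : p+m ≤ p+2*m)]
    rw [Finset.filter_union]
    exact Finset.card_union_of_disjoint
      (Finset.disjoint_filter_filter (Finset.Ico_disjoint_Ico_consecutive p (p+m) (p+2*m)))
  have hanti : dsc C.d (p+m) (p+2*m) = asc C.d p (p+m) := by
    clear hcard1 hcard2
    unfold dsc asc
    symm
    apply Finset.card_bij (fun k _ => k + m)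
    · intro k hk
      rw [Finset.mem_filter, Finset.mem_Ico] at hk ⊢
      obtain ⟨⟨hk1, hk2⟩, hk3, hk4⟩ := hk
      refine ⟨⟨by omega, by omega⟩, ?_, ?_⟩
      · rw [C.hdm, hk3]; rfl
      · rw [show k+m+1 = (k+1)+m from by omega, C.hdm, hk4]; rfl
    · intro k1 _ k2 _ h
      omega
    · intro k' hk'
      rw [Finset.mem_filter, Finset.mem_Ico] at hk'
      obtain ⟨⟨h1', h2'⟩, h3', h4'⟩ := hk'
      refine ⟨k' - m, ?_, by omega⟩
      rw [Finset.mem_filter, Finset.mem_Ico]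
      have e1 : k' - m + m = k' := by omega
      have e2 := C.hdm (k'-m)
      rw [e1] at e2
      have e3 := C.hdm (k'-m+1)
      rw [show k'-m+1+m = k'+1 from by omega] at e3
      refine ⟨⟨by omega, by omega⟩, ?_, ?_⟩
      · rw [e2] at h3'; cases hdd : C.d (k'-m) <;> simp_all
      · rw [e3] at h4'; cases hdd : C.d (k'-m+1) <;> simp_all
  -- the descent/ascent balance
  have hbal := dsc_asc C.d p m
  rw [hp2, hdpm, if_neg Bool.false_ne_true, if_pos rfl] at hbal
  -- conclude
  rw [← hcard2, ← hcard1]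
  clear hcard1 hcard2
  omega
end

section
/- Let R = (T^0, …, T^{2m-1}) be a symmetric cycle of {-,+}-sign vectors on E_m, and let M := max⁺(V(R)). Then |M| is odd. -/
namespace S8
open Finset

variable {m : ℕ}

lemma mem_sep_iff {X Y : SV m} {e : Fin m} : e ∈ sep X Y ↔ X e ≠ Y e := by
  simp [sep]

lemma mem_posPart_iff {X : SV m} {e : Fin m} : e ∈ _root_.posPart X ↔ X e = true := by
  constructor
  · intro h; exact (Finset.mem_filter.mp h).2
  · intro h; exact Finset.mem_filter.mpr ⟨Finset.mem_univ _, h⟩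

lemma posPart_subset_iff {X Y : SV m} :
    _root_.posPart X ⊆ _root_.posPart Y ↔ ∀ e, X e = true → Y e = true := by
  simp only [Finset.subset_iff, mem_posPart_iff]

section
variable {T : ℕ → SV m} {f : ℕ → Fin m}

lemma flip_ne (hf : ∀ k, sep (T k) (T (k+1)) = {f k}) (k : ℕ) :
    T k (f k) ≠ T (k+1) (f k) := by
  have : f k ∈ sep (T k) (T (k+1)) := by rw [hf k]; exact mem_singleton_self _
  exact mem_sep_iff.mp this

lemma flip_eq (hf : ∀ k, sep (T k) (T (k+1)) = {f k}) (k : ℕ) {e : Fin m}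
    (he : e ≠ f k) : T k e = T (k+1) e := by
  by_contra h
  have := mem_sep_iff.mpr h
  rw [hf k, mem_singleton] at this
  exact he this

/-- if no flip of `e` in `[a,b)` then value constant -/
lemma prop_const (hf : ∀ k, sep (T k) (T (k+1)) = {f k}) {e : Fin m} :
    ∀ a b, a ≤ b → (∀ j, a ≤ j → j < b → f j ≠ e) → T a e = T b e := by
  intro a b hab
  induction b, hab using Nat.le_induction with
  | base => intro _; rfl
  | succ n hn ih =>
    intro h
    have h1 : T a e = T n e := ih (fun j hj hj' => h j hj (by omega))
    have h2 : T n e = T (n+1) e :=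
      flip_eq hf n (fun he => h n hn (by omega) (by rw [he]))
    rw [h1, h2]


variable (hsym : ∀ k, T (k + m) = fun e => ! T k e)
         (hf : ∀ k, sep (T k) (T (k+1)) = {f k})

include hsym hf in
/-- each coordinate flips exactly once per window of m steps: injectivity -/
lemma window_inj : ∀ k j1 j2, k ≤ j1 → j1 < j2 → j2 < k + m → f j1 ≠ f j2 := by
  intro k j1 j2 h1 h12 h2 hfe
  have hcard : (Finset.Ico k (k+m)).card = Finset.univ.card (α := Fin m) := by
    simp [Nat.Ico_eq_range']
  have hsum := Finset.card_eq_sum_card_fiberwise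
    (s := Finset.Ico k (k+m)) (t := Finset.univ) (f := f)
    (fun x _ => Finset.mem_univ (f x))
  have hge : ∀ e : Fin m, 1 ≤ ((Finset.Ico k (k+m)).filter (fun j => f j = e)).card := by
    intro e
    rw [Nat.one_le_iff_ne_zero, Ne, Finset.card_eq_zero, ← Finset.not_nonempty_iff_eq_empty,
      not_not]
    by_contra hno
    rw [Finset.not_nonempty_iff_eq_empty, Finset.filter_eq_empty_iff] at hno
    have : T k e = T (k+m) e := by
      apply prop_const hf k (k+m) (by omega)
      intro j hj hj' hje
      exact hno (Finset.mem_Ico.mpr ⟨hj, hj'⟩) hje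
    have h2 : T (k+m) e = ! T k e := by rw [hsym k]
    rw [h2] at this
    exact (Bool.eq_not_self _).mp this
  have hone : ∀ e : Fin m, ((Finset.Ico k (k+m)).filter (fun j => f j = e)).card = 1 := by
    have heq : (∑ e : Fin m, 1) = ∑ e : Fin m,
        ((Finset.Ico k (k+m)).filter (fun j => f j = e)).card := by
      rw [← hsum]
      simp [hcard.symm, Nat.Ico_eq_range']
    have := (Finset.sum_eq_sum_iff_of_le (fun e _ => hge e)).mp heq
    intro e
    exact (this e (Finset.mem_univ e)).symm ▸ rfl
  have hpair : ({j1, j2} : Finset ℕ) ⊆ (Finset.Ico k (k+m)).filter (fun j => f j = f j2) := by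
    intro j hj
    rw [Finset.mem_insert, Finset.mem_singleton] at hj
    rcases hj with rfl | rfl
    · exact Finset.mem_filter.mpr ⟨Finset.mem_Ico.mpr ⟨h1, by omega⟩, hfe⟩
    · exact Finset.mem_filter.mpr ⟨Finset.mem_Ico.mpr ⟨by omega, h2⟩, rfl⟩
  have : ({j1, j2} : Finset ℕ).card ≤ 1 := (hone (f j2)) ▸ Finset.card_le_card hpair
  rw [Finset.card_insert_of_notMem (by simp; omega), Finset.card_singleton] at this
  omega

include hsym hf in
lemma no_flip : ∀ k l, k < l → l ≤ k + m → T l (f k) = ! T k (f k) := by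
  intro k l hkl hlm
  have h1 : T (k+1) (f k) = ! T k (f k) := by
    have := flip_ne hf k
    cases hTk : T k (f k) <;> cases hTk1 : T (k+1) (f k) <;>
      simp_all
  have h2 : T (k+1) (f k) = T l (f k) := by
    apply prop_const hf (k+1) l (by omega)
    intro j hj hj' hje
    exact window_inj hsym hf k k j (le_refl k) (by omega) (by omega) hje.symm
  rw [← h2, h1]

include hsym in
lemma Tper : ∀ k, T (k + 2*m) = T k := by
  intro k
  funext e
  have h1 : T (k + 2*m) e = ! T (k + m) e := by
    have : k + 2*m = (k + m) + m := by ring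
    rw [this, hsym (k+m)]
  have h2 : T (k + m) e = ! T k e := by rw [hsym k]
  rw [h1, h2, Bool.not_not]

include hsym in
lemma Tmod : ∀ a b, a % (2*m) = b % (2*m) → T a = T b := by
  have key : ∀ a, T a = T (a % (2*m)) := by
    intro a
    conv_lhs => rw [← Nat.mod_add_div a (2*m)]
    generalize a / (2*m) = q
    induction q with
    | zero => rfl
    | succ n ih =>
      have : a % (2*m) + 2*m * (n+1) = (a % (2*m) + 2*m*n) + 2*m := by ring
      rw [this, Tper hsym, ih]
  intro a b h
  rw [key a, key b, h]

include hsym hf in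
lemma T_inj1 : ∀ a b, a < b → b ≤ a + m → T a ≠ T b := by
  intro a b h1 h2 he
  have := no_flip hsym hf a b h1 h2
  rw [← he] at this
  exact (Bool.eq_not_self _).mp this

include hsym hf in
lemma T_inj2 : ∀ a b, a < b → b < a + 2*m → T a ≠ T b := by
  intro a b h1 h2 he
  by_cases hb : b ≤ a + m
  · exact T_inj1 hsym hf a b h1 hb he
  · have h3 := T_inj1 hsym hf b (a + 2*m) (by omega) (by omega)
    rw [Tper hsym a] at h3
    exact h3 he.symm

include hsym in
lemma shift (hm : 0 < m) : ∀ a l : ℕ, ∃ l', a ≤ l' ∧ l' < a + 2*m ∧ T l' = T l := by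
  intro a
  induction a with
  | zero =>
    intro l
    refine ⟨l % (2*m), Nat.zero_le _, by simpa using Nat.mod_lt l (by omega), ?_⟩
    exact Tmod hsym (l % (2*m)) l (Nat.mod_mod_of_dvd l dvd_rfl)
  | succ n ih =>
    intro l
    obtain ⟨l', h1, h2, h3⟩ := ih l
    by_cases h : n + 1 ≤ l'
    · exact ⟨l', h, by omega, h3⟩
    · have hl' : l' = n := by omega
      refine ⟨n + 2*m, by omega, by omega, ?_⟩
      rw [Tper hsym, ← hl', h3]

include hsym hf in
lemma f_antipodal : ∀ k, f (k + m) = f k := by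
  intro k
  have hs : sep (T (k+m)) (T (k+m+1)) = sep (T k) (T (k+1)) := by
    ext e
    rw [mem_sep_iff, mem_sep_iff]
    have e1 : T (k+m) e = ! T k e := by rw [hsym k]
    have e2 : T (k+m+1) e = ! T (k+1) e := by
      have : k + m + 1 = (k+1) + m := by ring
      rw [this, hsym (k+1)]
    rw [e1, e2]
    cases T k e <;> cases T (k+1) e <;> simp
  have := (hf (k+m)).symm.trans (hs.trans (hf k))
  exact Finset.singleton_inj.mp this

include hsym hf in
/-- local max implies global max -/
lemma lemA (hm : 0 < m) (k : ℕ) (hgk : T k (f k) = false) (hgk1 : T (k+1) (f (k+1)) = true) :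
    ∀ l, ¬ (_root_.posPart (T (k+1)) ⊂ _root_.posPart (T l)) := by
  intro l hsub
  obtain ⟨l', hl1, hl2, hl3⟩ := shift hsym hm (k+1) l
  rw [← hl3] at hsub
  rcases Nat.lt_or_ge (k+1) l' with hcase | hcase
  · -- l' > k+1
    rcases le_or_gt l' (k+1+m) with hc2 | hc2
    · -- use coordinate f (k+1)
      have hTl : T l' (f (k+1)) = false := by
        rw [no_flip hsym hf (k+1) l' hcase hc2, hgk1]
        rfl
      have := posPart_subset_iff.mp hsub.subset (f (k+1)) hgk1
      rw [hTl] at this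
      exact Bool.false_ne_true this
    · -- use coordinate f k
      have hTk1 : T (k+1) (f k) = true := by
        have h1 : T (k+1) (f k) = ! T k (f k) := by
          have := flip_ne hf k
          cases h : T (k+1) (f k) <;> simp_all
        rw [h1, hgk]; rfl
      have hmid : T (l' - m) (f k) = ! T k (f k) := by
        apply no_flip hsym hf k (l' - m) (by omega) (by omega)
      have hTl : T l' (f k) = false := by
        have : T l' (f k) = ! T (l' - m) (f k) := by
          have h := congrFun (hsym (l' - m)) (f k)
          have hx : l' - m + m = l' := by omega
          rw [hx] at h
          exact h
        rw [this, hmid, hgk]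
        rfl
      have := posPart_subset_iff.mp hsub.subset (f k) hTk1
      rw [hTl] at this
      exact Bool.false_ne_true this
  · -- l' = k+1
    have : l' = k+1 := by omega
    rw [this] at hsub
    exact (ssubset_irrefl _) hsub

include hsym hf in
/-- not a local max implies dominated -/
lemma lemB (k : ℕ) (h : ¬ (T k (f k) = false ∧ T (k+1) (f (k+1)) = true)) :
    ∃ l, _root_.posPart (T (k+1)) ⊂ _root_.posPart (T l) := by
  rw [not_and_or] at h
  have dom : ∀ a e, T a e = false → T (a+1) e = true → _root_.posPart (T a) ⊂ _root_.posPart (T (a+1)) := by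
    intro a e h1 h2
    have hef : e = f a := by
      by_contra hne
      rw [flip_eq hf a hne, h2] at h1
      simp at h1
    constructor
    · rw [posPart_subset_iff]
      intro e' he'
      by_cases hee : e' = f a
      · rw [hee, ← hef, h1] at he'
        exact absurd he' (by simp)
      · rw [← flip_eq hf a hee]; exact he'
    · intro hcon
      have := posPart_subset_iff.mp hcon e h2
      rw [h1] at this
      exact Bool.false_ne_true this
  rcases h with h | h
  · -- T k (f k) = true : T (k+1) ⊂ T k
    have h1 : T k (f k) = true := by cases hT : T k (f k) <;> simp_all
    have h2 : T (k+1) (f k) = false := by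
      have := flip_ne hf k
      cases hT : T (k+1) (f k) <;> simp_all
    refine ⟨k, ?_⟩
    constructor
    · rw [posPart_subset_iff]
      intro e' he'
      by_cases hee : e' = f k
      · rw [hee] at he'; rw [h2] at he'; exact absurd he' (by simp)
      · rw [flip_eq hf k hee]; exact he'
    · intro hcon
      have := posPart_subset_iff.mp hcon (f k) h1
      rw [h2] at this
      exact Bool.false_ne_true this
  · -- T (k+1) (f (k+1)) = false : T (k+1) ⊂ T (k+2)
    have h1 : T (k+1) (f (k+1)) = false := by cases hT : T (k+1) (f (k+1)) <;> simp_all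
    have h2 : T (k+2) (f (k+1)) = true := by
      have := flip_ne hf (k+1)
      cases hT : T (k+2) (f (k+1)) <;> simp_all
    exact ⟨k+2, dom (k+1) (f (k+1)) h1 h2⟩

end

lemma parity (hm : 0 < m) (g : ℕ → Bool) (hg : ∀ k, g (k + m) = ! g k) :
    Odd ((Finset.range (2*m)).filter (fun k => g k = false ∧ g (k+1) = true)).card := by
  set cnt := ((Finset.range (2*m)).filter (fun k => g k = false ∧ g (k+1) = true)).card with hcnt
  have key : (cnt : ZMod 2) = 1 := by
    rw [hcnt, Finset.card_filter]
    push_cast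
    have h2m : 2*m = m + m := by ring
    rw [h2m, Finset.sum_range_add]
    have hsecond : ∀ k, (if g (m + k) = false ∧ g (m + k + 1) = true then (1 : ZMod 2) else 0)
        = (if g k = true ∧ g (k+1) = false then (1 : ZMod 2) else 0) := by
      intro k
      have e1 : g (m + k) = ! g k := by rw [add_comm m k]; exact hg k
      have e2 : g (m + k + 1) = ! g (k+1) := by
        have : m + k + 1 = (k + 1) + m := by ring
        rw [this]; exact hg (k+1)
      rw [e1, e2]
      cases g k <;> cases g (k+1) <;> simp
    rw [Finset.sum_congr rfl (fun k _ => hsecond k), ← Finset.sum_add_distrib]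
    have hcomb : ∀ k, ((if g k = false ∧ g (k+1) = true then (1 : ZMod 2) else 0)
        + (if g k = true ∧ g (k+1) = false then (1 : ZMod 2) else 0))
        = (if g k = true then (1 : ZMod 2) else 0) + (if g (k+1) = true then (1:ZMod 2) else 0) := by
      intro k
      cases g k <;> cases g (k+1) <;> simp <;> decide
    rw [Finset.sum_congr rfl (fun k _ => hcomb k), Finset.sum_add_distrib]
    have hshift : (∑ k ∈ Finset.range m, (if g (k+1) = true then (1:ZMod 2) else 0))
        + (if g 0 = true then (1:ZMod 2) else 0)
        = (∑ k ∈ Finset.range m, (if g k = true then (1:ZMod 2) else 0))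
        + (if g m = true then (1:ZMod 2) else 0) := by
      rw [← Finset.sum_range_succ' (fun k => if g k = true then (1:ZMod 2) else 0) m,
        Finset.sum_range_succ]
    have hgm : g m = ! g 0 := by have := hg 0; simpa using this
    have hfin : (if g 0 = true then (1:ZMod 2) else 0) + (if g m = true then (1:ZMod 2) else 0)
        = 1 := by
      rw [hgm]; cases g 0 <;> decide
    have h2 : ∀ x : ZMod 2, x + x = 0 := by decide
    set A := ∑ k ∈ Finset.range m, (if g k = true then (1:ZMod 2) else 0) with hA
    set B := ∑ k ∈ Finset.range m, (if g (k+1) = true then (1:ZMod 2) else 0) with hB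
    set a := (if g 0 = true then (1:ZMod 2) else 0)
    set b := (if g m = true then (1:ZMod 2) else 0)
    have hBa : B = A + a + b := by
      calc B = B + a + a := by rw [add_assoc, h2 a, add_zero]
        _ = A + b + a := by rw [hshift]
        _ = A + a + b := by ring
    rw [hBa]
    calc A + (A + a + b) = (A + A) + (a + b) := by ring
      _ = 0 + 1 := by rw [h2 A, hfin]
      _ = 1 := by ring
  -- convert to Odd
  rcases Nat.even_or_odd cnt with h | h
  · exfalso
    obtain ⟨t, ht⟩ := h
    rw [ht] at key
    push_cast at key
    have : (2 : ZMod 2) = 0 := by decide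
    rw [show ((t:ZMod 2) + t) = 2 * t by ring, this, zero_mul] at key
    exact absurd key (by decide)
  · exact h

end S8


theorem stmt_8 {m : ℕ} (hm : 0 < m) (T : ℕ → SV m)
    (hsym : ∀ k, T (k + m) = fun e => ! T k e)
    (hstep : ∀ k, (sep (T k) (T (k + 1))).card = 1) :
    Odd (maxPlus ((Finset.range (2 * m)).image T)).card := by
  classical
  choose f hf using fun k => Finset.card_eq_one.mp (hstep k)
  have hmemV : ∀ l : ℕ, T l ∈ (Finset.range (2*m)).image T := by
    intro l
    rw [Finset.mem_image]
    exact ⟨l % (2*m), Finset.mem_range.mpr (Nat.mod_lt l (by omega)),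
      (S8.Tmod hsym (l % (2*m)) l (Nat.mod_mod_of_dvd l dvd_rfl))⟩
  have himg : maxPlus ((Finset.range (2*m)).image T) =
      ((Finset.range (2*m)).filter
        (fun k => T k (f k) = false ∧ T (k+1) (f (k+1)) = true)).image (fun k => T (k+1)) := by
    ext X
    simp only [maxPlus, Finset.mem_filter, Finset.mem_image]
    constructor
    · rintro ⟨⟨j, hj, hjX⟩, hmax⟩
      set k := (j + (2*m - 1)) % (2*m) with hk
      have hk2m : k < 2*m := Nat.mod_lt _ (by omega)
      have hTk1 : T (k+1) = T j := by
        apply S8.Tmod hsym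
        calc (k+1) % (2*m) = ((j + (2*m-1)) % (2*m) + 1) % (2*m) := rfl
          _ = (j + (2*m-1) + 1) % (2*m) := Nat.mod_add_mod _ _ _
          _ = (j + 2*m) % (2*m) := by congr 1; omega
          _ = j % (2*m) := Nat.add_mod_right j (2*m)
      refine ⟨k, ⟨Finset.mem_range.mpr hk2m, ?_⟩, by rw [hTk1, hjX]⟩
      by_contra hnot
      obtain ⟨l, hl⟩ := S8.lemB hsym hf k hnot
      rw [hTk1, hjX] at hl
      exact hmax (T l) (Finset.mem_image.mp (hmemV l)) hl
    · rintro ⟨k, ⟨hkr, hg1, hg2⟩, hX⟩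
      rw [← hX]
      refine ⟨Finset.mem_image.mp (hmemV (k+1)), ?_⟩
      intro Y hY
      obtain ⟨l, _, rfl⟩ := hY
      exact S8.lemA hsym hf hm k hg1 hg2 l
  rw [himg, Finset.card_image_of_injOn]
  · have hg : ∀ k, (fun k => T k (f k)) (k + m) = ! (fun k => T k (f k)) k := by
      intro k
      simp only
      rw [S8.f_antipodal hsym hf k, hsym k]
    exact S8.parity hm (fun k => T k (f k)) hg
  · intro k1 hk1 k2 hk2 hT
    simp only [Finset.coe_filter, Finset.mem_range, Set.mem_setOf_eq] at hk1 hk2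
    rcases lt_trichotomy k1 k2 with h | h | h
    · exact absurd hT (S8.T_inj2 hsym hf (k1+1) (k2+1) (by omega) (by omega))
    · exact h
    · exact absurd hT.symm (S8.T_inj2 hsym hf (k2+1) (k1+1) (by omega) (by omega))
end

section
/- Let R = (T^0, …, T^{2m-1}) be a symmetric cycle of {-,+}-sign vectors on E_m not containing the all-plus vector, and let M := max⁺(V(R)). Then no proper subset of M is a committee; that is, M is a minimal committee. -/
namespace S11

lemma mem_posPart {m : ℕ} {X : SV m} {e : Fin m} : e ∈ _root_.posPart X ↔ X e = true := by
  unfold _root_.posPart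
  simp

lemma posPart_inj {m : ℕ} {X Y : SV m} (h : _root_.posPart X = _root_.posPart Y) : X = Y := by
  funext e
  have := congrArg (fun s => e ∈ s) h
  simp only [mem_posPart, eq_iff_iff] at this
  cases hx : X e <;> cases hy : Y e <;> simp_all

section Cycle
variable {m : ℕ} (T : ℕ → SV m)

lemma periodT (hsym : ∀ k, T (k + m) = fun e => ! T k e) (k : ℕ) : T (k + 2*m) = T k := by
  have h1 : k + 2*m = (k + m) + m := by ring
  rw [h1, hsym, hsym]
  funext e; simp

lemma flip_exists (hstep : ∀ k, (sep (T k) (T (k + 1))).card = 1) (k : ℕ) :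
    ∃ e, T k e ≠ T (k+1) e := by
  obtain ⟨a, ha⟩ := Finset.card_eq_one.mp (hstep k)
  refine ⟨a, ?_⟩
  have : a ∈ sep (T k) (T (k+1)) := by rw [ha]; exact Finset.mem_singleton_self a
  simpa [sep] using this

lemma flip_unique (hstep : ∀ k, (sep (T k) (T (k + 1))).card = 1) {k : ℕ} {e f : Fin m}
    (he : T k e ≠ T (k+1) e) (hf : T k f ≠ T (k+1) f) : e = f := by
  obtain ⟨a, ha⟩ := Finset.card_eq_one.mp (hstep k)
  have h1 : e ∈ sep (T k) (T (k+1)) := by simp [sep, he]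
  have h2 : f ∈ sep (T k) (T (k+1)) := by simp [sep, hf]
  rw [ha, Finset.mem_singleton] at h1 h2
  rw [h1, h2]

lemma const_of_no_flip {e : Fin m} {k k' : ℕ} (hkk : k ≤ k')
    (h : ∀ j, k ≤ j → j < k' → T j e = T (j+1) e) : T k e = T k' e := by
  induction k' , hkk using Nat.le_induction with
  | base => rfl
  | succ n hn ih =>
    have := ih (fun j hj hj' => h j hj (by omega))
    rw [this, h n hn (by omega)]

lemma flips_window (hm : 0 < m) (hsym : ∀ k, T (k + m) = fun e => ! T k e)
    (hstep : ∀ k, (sep (T k) (T (k + 1))).card = 1) (e : Fin m) (k : ℕ) :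
    ((Finset.Ico k (k+m)).filter (fun j => T j e ≠ T (j+1) e)).card = 1 := by
  -- each coordinate flips at least once in the window
  have hge : ∀ f : Fin m, 1 ≤ ((Finset.Ico k (k+m)).filter (fun j => T j f ≠ T (j+1) f)).card := by
    intro f
    rw [Nat.one_le_iff_ne_zero, Ne, Finset.card_eq_zero, ← Ne, ← Finset.nonempty_iff_ne_empty]
    by_contra hc
    push_neg at hc
    have hnof : ∀ j, k ≤ j → j < k + m → T j f = T (j+1) f := by
      intro j hj hj'
      by_contra hne
      exact Finset.eq_empty_iff_forall_notMem.mp hc j (Finset.mem_filter.mpr ⟨Finset.mem_Ico.mpr ⟨hj, hj'⟩, hne⟩)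
    have := const_of_no_flip T (by omega : k ≤ k + m) hnof
    have h2 : T (k+m) f = ! T k f := by rw [hsym k]
    rw [h2] at this
    cases h : T k f <;> simp [h] at this
  -- sum over coordinates equals m
  have hsum : ∑ f : Fin m, ((Finset.Ico k (k+m)).filter (fun j => T j f ≠ T (j+1) f)).card = m := by
    have : ∀ f : Fin m, ((Finset.Ico k (k+m)).filter (fun j => T j f ≠ T (j+1) f)).card
        = ∑ j ∈ Finset.Ico k (k+m), if T j f ≠ T (j+1) f then 1 else 0 := by
      intro f; rw [Finset.card_filter]
    simp_rw [this]
    rw [Finset.sum_comm]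
    have : ∀ j ∈ Finset.Ico k (k+m), ∑ f : Fin m, (if T j f ≠ T (j+1) f then 1 else 0) = 1 := by
      intro j _
      have h := hstep j
      rw [sep, Finset.card_filter] at h
      exact h
    rw [Finset.sum_congr rfl this]
    simp
  -- conclude each is exactly 1
  by_contra hne
  have h2 : 2 ≤ ((Finset.Ico k (k+m)).filter (fun j => T j e ≠ T (j+1) e)).card := by
    have := hge e; omega
  have hlt : m < ∑ f : Fin m, ((Finset.Ico k (k+m)).filter (fun j => T j f ≠ T (j+1) f)).card := by
    calc m = ∑ _f : Fin m, 1 := by simp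
    _ < _ := by
        apply Finset.sum_lt_sum
        · intro i _; exact hge i
        · exact ⟨e, Finset.mem_univ e, by omega⟩
  omega

lemma value_const_window (hm : 0 < m) (hsym : ∀ k, T (k + m) = fun e => ! T k e)
    (hstep : ∀ k, (sep (T k) (T (k + 1))).card = 1) {e : Fin m} {j : ℕ}
    (hflip : T j e ≠ T (j+1) e) :
    ∀ i, j+1 ≤ i → i ≤ j + m → T i e = T (j+1) e := by
  intro i hi1 hi2
  have hw := flips_window T hm hsym hstep e j
  obtain ⟨a, ha⟩ := Finset.card_eq_one.mp hw
  have hja : j ∈ Finset.filter (fun j' => T j' e ≠ T (j'+1) e) (Finset.Ico j (j+m)) :=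
    Finset.mem_filter.mpr ⟨Finset.mem_Ico.mpr ⟨le_refl j, by omega⟩, hflip⟩
  rw [ha, Finset.mem_singleton] at hja
  have hnof : ∀ j', j+1 ≤ j' → j' < i → T j' e = T (j'+1) e := by
    intro j' hj1 hj2
    by_contra hne
    have : j' ∈ Finset.filter (fun j'' => T j'' e ≠ T (j''+1) e) (Finset.Ico j (j+m)) :=
      Finset.mem_filter.mpr ⟨Finset.mem_Ico.mpr ⟨by omega, by omega⟩, hne⟩
    rw [ha, Finset.mem_singleton] at this
    omega
  exact (const_of_no_flip T hi1 hnof).symm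


/-- Up step at `k`: some coordinate goes from false to true. -/
def Up (k : ℕ) : Prop := ∃ e, T k e = false ∧ T (k+1) e = true

/-- Down step at `k`. -/
def Dn (k : ℕ) : Prop := ∃ e, T k e = true ∧ T (k+1) e = false

instance (k : ℕ) : Decidable (Up T k) := by unfold Up; infer_instance
instance (k : ℕ) : Decidable (Dn T k) := by unfold Dn; infer_instance

lemma dn_iff_not_up (hstep : ∀ k, (sep (T k) (T (k + 1))).card = 1) (k : ℕ) :
    Dn T k ↔ ¬ Up T k := by
  constructor
  · rintro ⟨e, he1, he2⟩ ⟨f, hf1, hf2⟩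
    have : e = f := flip_unique T hstep (by rw [he1, he2]; simp) (by rw [hf1, hf2]; simp)
    subst this; rw [he1] at hf1; exact absurd hf1 (by simp)
  · intro h
    obtain ⟨e, he⟩ := flip_exists T hstep k
    cases h1 : T k e <;> cases h2 : T (k+1) e
    · rw [h1, h2] at he; simp at he
    · exact absurd ⟨e, h1, h2⟩ h
    · exact ⟨e, h1, h2⟩
    · rw [h1, h2] at he; simp at he

lemma up_add_m (hsym : ∀ k, T (k + m) = fun e => ! T k e) (k : ℕ) :
    Up T (k + m) ↔ Dn T k := by
  unfold Up Dn
  have h1 : T (k + m) = fun e => ! T k e := hsym k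
  have h2 : T (k + m + 1) = fun e => ! T (k+1) e := by
    have : k + m + 1 = (k+1) + m := by ring
    rw [this, hsym]
  rw [h1, h2]
  constructor
  · rintro ⟨e, he1, he2⟩
    simp only at he1 he2
    exact ⟨e, by simpa using he1, by simpa using he2⟩
  · rintro ⟨e, he1, he2⟩
    exact ⟨e, by simp [he1], by simp [he2]⟩

lemma up_period (hsym : ∀ k, T (k + m) = fun e => ! T k e) (k : ℕ) :
    Up T (k + 2*m) ↔ Up T k := by
  unfold Up
  rw [periodT T hsym k, show k + 2*m + 1 = (k+1) + 2*m by ring, periodT T hsym (k+1)]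

/-- `T k` is a local maximum position. -/
def MaxPos (k : ℕ) : Prop := Dn T k ∧ Up T (k + (2*m - 1))

instance (k : ℕ) : Decidable (MaxPos T k) := by unfold MaxPos; infer_instance

lemma maxPos_succ (hm : 0 < m) (hsym : ∀ k, T (k + m) = fun e => ! T k e)
    (hstep : ∀ k, (sep (T k) (T (k + 1))).card = 1) (j : ℕ) :
    MaxPos T (j+1) ↔ (Up T j ∧ ¬ Up T (j+1)) := by
  unfold MaxPos
  have h1 : j + 1 + (2*m - 1) = j + 2*m := by omega
  rw [h1, up_period T hsym j, dn_iff_not_up T hstep]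
  tauto

lemma maxPos_succ_m (hm : 0 < m) (hsym : ∀ k, T (k + m) = fun e => ! T k e)
    (hstep : ∀ k, (sep (T k) (T (k + 1))).card = 1) (j : ℕ) :
    MaxPos T (j+1+m) ↔ (Up T (j+1) ∧ ¬ Up T j) := by
  unfold MaxPos
  have h1 : j + 1 + m + (2*m - 1) = (j + m) + 2*m := by omega
  rw [h1, up_period T hsym (j+m)]
  rw [show j+1+m = (j+1)+m by ring]
  simp only [up_add_m T hsym, dn_iff_not_up T hstep, not_not]

lemma maxPos_period (hsym : ∀ k, T (k + m) = fun e => ! T k e) (k : ℕ) :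
    MaxPos T (k + 2*m) ↔ MaxPos T k := by
  unfold MaxPos Dn
  rw [periodT T hsym k, show k + 2*m + 1 = (k+1) + 2*m by ring, periodT T hsym (k+1),
    show k + 2*m + (2*m-1) = (k + (2*m-1)) + 2*m by omega, up_period T hsym]

/-- indicator of up steps -/
noncomputable def w (k : ℕ) : ℤ := if Up T k then 1 else 0

/-- indicator of max positions -/
noncomputable def f (k : ℕ) : ℤ := if MaxPos T k then 1 else 0

lemma f_nonneg (k : ℕ) : 0 ≤ f T k := by unfold f; split <;> norm_num

lemma f_period (hsym : ∀ k, T (k + m) = fun e => ! T k e) (k : ℕ) :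
    f T (k + 2*m) = f T k := by
  unfold f; rw [if_congr (maxPos_period T hsym k) rfl rfl]

lemma f_sub (hm : 0 < m) (hsym : ∀ k, T (k + m) = fun e => ! T k e)
    (hstep : ∀ k, (sep (T k) (T (k + 1))).card = 1) (j : ℕ) :
    f T (j+1) - f T (j+1+m) = w T j - w T (j+1) := by
  unfold f w
  rw [if_congr (maxPos_succ T hm hsym hstep j) rfl rfl,
      if_congr (maxPos_succ_m T hm hsym hstep j) rfl rfl]
  by_cases h1 : Up T j <;> by_cases h2 : Up T (j+1) <;> simp [h1, h2]

lemma tele (hm : 0 < m) (hsym : ∀ k, T (k + m) = fun e => ! T k e)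
    (hstep : ∀ k, (sep (T k) (T (k + 1))).card = 1) (l : ℕ) :
    (∑ i ∈ Finset.range m, f T (l+1+i)) - (∑ i ∈ Finset.range m, f T (l+1+m+i))
      = w T l - w T (l+m) := by
  have h1 : (∑ i ∈ Finset.range m, f T (l+1+i)) - (∑ i ∈ Finset.range m, f T (l+1+m+i))
      = ∑ i ∈ Finset.range m, (f T (l+1+i) - f T (l+1+i+m)) := by
    rw [Finset.sum_sub_distrib]
    congr 1
    apply Finset.sum_congr rfl
    intro i _
    congr 1
    ring
  rw [h1]
  have h2 : ∀ i ∈ Finset.range m, f T (l+1+i) - f T (l+1+i+m)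
      = w T (l+i) - w T (l+(i+1)) := by
    intro i _
    have e1 : l+1+i = l+i+1 := by ring
    have e2 : l+1+i+m = l+i+1+m := by ring
    have e3 : l+(i+1) = l+i+1 := by ring
    rw [e1, e3]
    exact f_sub T hm hsym hstep (l+i)
  rw [Finset.sum_congr rfl h2]
  have := Finset.sum_range_sub' (fun i => w T (l+i)) m
  simpa using this


lemma exists_arc (hm : 0 < m) (hsym : ∀ k, T (k + m) = fun e => ! T k e)
    (hstep : ∀ k, (sep (T k) (T (k + 1))).card = 1) (e : Fin m) :
    ∃ l0, l0 + 1 ≤ 2*m ∧ (∀ i, l0+1 ≤ i → i < l0+1+m → T i e = true) ∧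
      (∀ i, l0+1+m ≤ i → i < l0+1+2*m → T i e = false) := by
  have hw := flips_window T hm hsym hstep e 0
  obtain ⟨a, ha⟩ := Finset.card_eq_one.mp hw
  have haa : a ∈ Finset.filter (fun j => T j e ≠ T (j+1) e) (Finset.Ico 0 (0+m)) := by
    rw [ha]; exact Finset.mem_singleton_self a
  rw [Finset.mem_filter, Finset.mem_Ico] at haa
  obtain ⟨⟨_, ham⟩, hflip⟩ := haa
  have hval : ∀ i, a+1 ≤ i → i ≤ a + m → T i e = T (a+1) e :=
    value_const_window T hm hsym hstep hflip
  have hneg : ∀ x, T (x + m) e = ! T x e := by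
    intro x; rw [hsym x]
  cases hc : T (a+1) e with
  | true =>
    refine ⟨a, by omega, ?_, ?_⟩
    · intro i hi1 hi2
      rw [hval i hi1 (by omega)]; exact hc
    · intro i hi1 hi2
      have h1 : T (i - m) e = true := by
        rw [hval (i-m) (by omega) (by omega)]; exact hc
      have h2 := hneg (i - m)
      rw [show i - m + m = i by omega] at h2
      rw [h2, h1]; rfl
  | false =>
    refine ⟨a + m, by omega, ?_, ?_⟩
    · intro i hi1 hi2
      have h1 : T (i - m) e = false := by
        rw [hval (i-m) (by omega) (by omega)]; exact hc
      have h2 := hneg (i - m)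
      rw [show i - m + m = i by omega] at h2
      rw [h2, h1]; rfl
    · intro i hi1 hi2
      have h1 : T (i - 2*m) e = false := by
        rw [hval (i-2*m) (by omega) (by omega)]; exact hc
      have h2 := periodT T hsym (i - 2*m)
      rw [show i - 2*m + 2*m = i by omega] at h2
      rw [h2]; exact h1

lemma sum_shift (F : ℕ → ℤ) (n : ℕ) (hF : ∀ k, F (k + n) = F k) (l : ℕ) (hl : l ≤ n) :
    ∑ i ∈ Finset.range n, F (l + i) = ∑ i ∈ Finset.range n, F i := by
  have A : ∑ i ∈ Finset.range n, F (l + i) = ∑ i ∈ Finset.Ico l (l + n), F i := by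
    rw [Finset.sum_Ico_eq_sum_range, show l + n - l = n by omega]
  have B : ∑ i ∈ Finset.Ico l (l+n), F i
      = ∑ i ∈ Finset.Ico l n, F i + ∑ i ∈ Finset.Ico n (l+n), F i :=
    (Finset.sum_Ico_consecutive _ hl (by omega)).symm
  have C : ∑ i ∈ Finset.Ico n (l+n), F i = ∑ i ∈ Finset.Ico 0 l, F i := by
    rw [Finset.sum_Ico_eq_sum_range, Finset.sum_Ico_eq_sum_range,
      show l + n - n = l by omega, show l - 0 = l by omega]
    apply Finset.sum_congr rfl
    intro i _
    rw [show n + i = (0 + i) + n by omega, hF]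
  have D : ∑ i ∈ Finset.range n, F i
      = ∑ i ∈ Finset.Ico 0 l, F i + ∑ i ∈ Finset.Ico l n, F i := by
    rw [Finset.sum_Ico_consecutive _ (by omega : 0 ≤ l) hl, Finset.range_eq_Ico]
  rw [A, B, C, D]; ring

/-- sign value -/
def chi (k : ℕ) (e : Fin m) : ℤ := if T k e = true then 1 else -1

lemma chi_period (hsym : ∀ k, T (k + m) = fun e => ! T k e) (k : ℕ) (e : Fin m) :
    chi T (k + 2*m) e = chi T k e := by
  unfold chi
  rw [periodT T hsym k]

lemma sum_range_two_blocks (G : ℕ → ℤ) (a : ℕ) :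
    ∑ i ∈ Finset.range (2*m), G (a + i)
      = ∑ i ∈ Finset.range m, G (a + i) + ∑ i ∈ Finset.range m, G (a + m + i) := by
  rw [two_mul, Finset.sum_range_add]
  congr 1
  apply Finset.sum_congr rfl
  intro i _
  congr 1
  ring

lemma fact1 (hm : 0 < m) (hsym : ∀ k, T (k + m) = fun e => ! T k e)
    (hstep : ∀ k, (sep (T k) (T (k + 1))).card = 1) (e : Fin m) :
    ∑ i ∈ Finset.range (2*m), f T i * chi T i e = 1 := by
  obtain ⟨l0, hl0, htrue, hfalse⟩ := exists_arc T hm hsym hstep e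
  set F : ℕ → ℤ := fun k => f T k * chi T k e with hF
  have hFper : ∀ k, F (k + 2*m) = F k := by
    intro k; simp only [hF]
    rw [f_period T hsym, chi_period T hsym]
  have h1 : ∑ i ∈ Finset.range (2*m), F i = ∑ i ∈ Finset.range (2*m), F (l0 + 1 + i) :=
    (sum_shift F (2*m) hFper (l0+1) hl0).symm
  rw [h1, sum_range_two_blocks F (l0+1)]
  have h2 : ∀ i ∈ Finset.range m, F (l0 + 1 + i) = f T (l0+1+i) := by
    intro i hi
    rw [Finset.mem_range] at hi
    simp only [hF, chi]
    rw [if_pos (htrue (l0+1+i) (by omega) (by omega))]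
    ring
  have h3 : ∀ i ∈ Finset.range m, F (l0 + 1 + m + i) = - f T (l0+1+m+i) := by
    intro i hi
    rw [Finset.mem_range] at hi
    simp only [hF, chi]
    rw [if_neg (by rw [hfalse (l0+1+m+i) (by omega) (by omega)]; simp)]
    ring
  rw [Finset.sum_congr rfl h2, Finset.sum_congr rfl h3, Finset.sum_neg_distrib]
  rw [show ∑ i ∈ Finset.range m, f T (l0+1+i) + -∑ i ∈ Finset.range m, f T (l0+1+m+i)
    = ∑ i ∈ Finset.range m, f T (l0+1+i) - ∑ i ∈ Finset.range m, f T (l0+1+m+i) by ring]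
  rw [tele T hm hsym hstep l0]
  have hup : Up T l0 := by
    refine ⟨e, ?_, htrue (l0+1) (by omega) (by omega)⟩
    have := periodT T hsym l0
    rw [← this]
    exact hfalse (l0 + 2*m) (by omega) (by omega)
  have hdn : Dn T (l0 + m) := by
    refine ⟨e, htrue (l0+m) (by omega) (by omega), ?_⟩
    exact hfalse (l0+m+1) (by omega) (by omega)
  have hnup : ¬ Up T (l0 + m) := (dn_iff_not_up T hstep (l0+m)).mp hdn
  unfold w
  rw [if_pos hup, if_neg hnup]
  norm_num


/-- the unique coordinate flipped at step `k` -/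
noncomputable def flipC (hstep : ∀ k, (sep (T k) (T (k + 1))).card = 1) (k : ℕ) : Fin m :=
  (flip_exists T hstep k).choose

lemma flipC_spec (hstep : ∀ k, (sep (T k) (T (k + 1))).card = 1) (k : ℕ) :
    T k (flipC T hstep k) ≠ T (k+1) (flipC T hstep k) :=
  (flip_exists T hstep k).choose_spec

lemma flipC_period (hsym : ∀ k, T (k + m) = fun e => ! T k e)
    (hstep : ∀ k, (sep (T k) (T (k + 1))).card = 1) (k : ℕ) :
    flipC T hstep (k + 2*m) = flipC T hstep k := by
  apply flip_unique T hstep (k := k)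
  · have h := flipC_spec T hstep (k + 2*m)
    rwa [periodT T hsym k, show k + 2*m + 1 = (k+1) + 2*m by ring, periodT T hsym (k+1)] at h
  · exact flipC_spec T hstep k

lemma dn_flipC (hstep : ∀ k, (sep (T k) (T (k + 1))).card = 1) {k : ℕ} (hdn : Dn T k) :
    T k (flipC T hstep k) = true ∧ T (k+1) (flipC T hstep k) = false := by
  obtain ⟨e, he1, he2⟩ := hdn
  have : e = flipC T hstep k := flip_unique T hstep (by rw [he1, he2]; simp) (flipC_spec T hstep k)
  rw [← this]
  exact ⟨he1, he2⟩

lemma subclaim (hm : 0 < m) (hsym : ∀ k, T (k + m) = fun e => ! T k e)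
    (hstep : ∀ k, (sep (T k) (T (k + 1))).card = 1) (d : ℕ)
    (hd : MaxPos T d) (hdle : d ≤ 2*m) :
    ∑ k ∈ Finset.range (2*m), f T k * chi T d (flipC T hstep k) = 1 := by
  set G : ℕ → ℤ := fun k => f T k * chi T d (flipC T hstep k) with hG
  have hGper : ∀ k, G (k + 2*m) = G k := by
    intro k; simp only [hG]
    rw [f_period T hsym, flipC_period T hsym hstep]
  have h1 : ∑ i ∈ Finset.range (2*m), G i = ∑ i ∈ Finset.range (2*m), G (d + i) :=
    (sum_shift G (2*m) hGper d hdle).symm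
  have h1' : ∀ i ∈ Finset.range (2*m), G (d + i) = G (d + 2*m + i) := by
    intro i _
    rw [show d + 2*m + i = (d + i) + 2*m by ring, hGper]
  rw [h1, Finset.sum_congr rfl h1', sum_range_two_blocks G (d + 2*m)]
  -- key window evaluations
  have key : ∀ k, Dn T k →
      (∀ x, k+1 ≤ x → x ≤ k+m → T x (flipC T hstep k) = false) := by
    intro k hdn x hx1 hx2
    obtain ⟨hk1, hk2⟩ := dn_flipC T hstep hdn
    have hflip : T k (flipC T hstep k) ≠ T (k+1) (flipC T hstep k) := flipC_spec T hstep k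
    rw [value_const_window T hm hsym hstep hflip x hx1 hx2, hk2]
  have h2 : ∀ i ∈ Finset.range m, G (d + 2*m + i) = f T (d + 2*m + i) := by
    intro i hi
    rw [Finset.mem_range] at hi
    by_cases hk : MaxPos T (d + 2*m + i)
    · simp only [hG, chi]
      have h3m : T (d + 3*m) (flipC T hstep (d + 2*m + i)) = false :=
        key (d + 2*m + i) hk.1 (d + 3*m) (by omega) (by omega)
      have h4m : T (d + 4*m) (flipC T hstep (d + 2*m + i)) = true := by
        have := congrFun (hsym (d + 3*m)) (flipC T hstep (d + 2*m + i))
        rw [show d + 3*m + m = d + 4*m by ring] at this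
        rw [this, h3m]; rfl
      have hdv : T d (flipC T hstep (d + 2*m + i)) = true := by
        have p1 := periodT T hsym (d + 2*m)
        have p2 := periodT T hsym d
        rw [show d + 4*m = d + 2*m + 2*m by ring] at h4m
        rw [p1, p2] at h4m
        exact h4m
      rw [if_pos hdv]; ring
    · simp only [hG, f, if_neg hk]; ring
  have h3 : ∀ i ∈ Finset.range m, G (d + 2*m + m + i) = - f T (d + 2*m + m + i) := by
    intro i hi
    rw [Finset.mem_range] at hi
    by_cases hk : MaxPos T (d + 2*m + m + i)
    · simp only [hG, chi]
      have h4m : T (d + 4*m) (flipC T hstep (d + 2*m + m + i)) = false :=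
        key (d + 2*m + m + i) hk.1 (d + 4*m) (by omega) (by omega)
      have hdv : T d (flipC T hstep (d + 2*m + m + i)) = false := by
        have p1 := periodT T hsym (d + 2*m)
        have p2 := periodT T hsym d
        rw [show d + 4*m = d + 2*m + 2*m by ring] at h4m
        rw [p1, p2] at h4m
        exact h4m
      rw [if_neg (by rw [hdv]; simp)]; ring
    · simp only [hG, f, if_neg hk]; ring
  rw [Finset.sum_congr rfl h2, Finset.sum_congr rfl h3, Finset.sum_neg_distrib]
  have harith : ∀ i : ℕ, d + 2*m + i = (d + (2*m - 1)) + 1 + i := by intro i; omega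
  have harith2 : ∀ i : ℕ, d + 2*m + m + i = (d + (2*m - 1)) + 1 + m + i := by intro i; omega
  have hs1 : ∑ i ∈ Finset.range m, f T (d + 2*m + i)
      = ∑ i ∈ Finset.range m, f T ((d + (2*m-1)) + 1 + i) := by
    apply Finset.sum_congr rfl; intro i _; rw [harith i]
  have hs2 : ∑ i ∈ Finset.range m, f T (d + 2*m + m + i)
      = ∑ i ∈ Finset.range m, f T ((d + (2*m-1)) + 1 + m + i) := by
    apply Finset.sum_congr rfl; intro i _; rw [harith2 i]
  rw [show (∑ i ∈ Finset.range m, f T (d + 2*m + i)) + -∑ i ∈ Finset.range m, f T (d + 2*m + m + i)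
    = (∑ i ∈ Finset.range m, f T (d + 2*m + i)) - ∑ i ∈ Finset.range m, f T (d + 2*m + m + i) by ring]
  rw [hs1, hs2, tele T hm hsym hstep (d + (2*m - 1))]
  have hup : Up T (d + (2*m - 1)) := hd.2
  have hnup : ¬ Up T (d + (2*m - 1) + m) := by
    rw [up_add_m T hsym (d + (2*m-1)), dn_iff_not_up T hstep]
    intro h; exact h hup
  unfold w
  rw [if_pos hup, if_neg hnup]
  norm_num

lemma fact2 (hm : 0 < m) (hsym : ∀ k, T (k + m) = fun e => ! T k e)
    (hstep : ∀ k, (sep (T k) (T (k + 1))).card = 1) (Dk : Finset ℕ)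
    (hsub : ∀ k ∈ Dk, MaxPos T k ∧ k ≤ 2*m) (hne : Dk.Nonempty) :
    ∃ e : Fin m, 1 ≤ ∑ d ∈ Dk, chi T d e := by
  by_contra hc
  push_neg at hc
  have hS : ∑ d ∈ Dk, ∑ k ∈ Finset.range (2*m), f T k * chi T d (flipC T hstep k)
      = (Dk.card : ℤ) := by
    rw [Finset.sum_congr rfl (fun d hd => subclaim T hm hsym hstep d (hsub d hd).1 (hsub d hd).2)]
    simp
  rw [Finset.sum_comm] at hS
  have hle : ∑ k ∈ Finset.range (2*m), ∑ d ∈ Dk, f T k * chi T d (flipC T hstep k) ≤ 0 := by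
    apply Finset.sum_nonpos
    intro k _
    rw [← Finset.mul_sum]
    apply mul_nonpos_of_nonneg_of_nonpos (f_nonneg T k)
    have := hc (flipC T hstep k)
    omega
  rw [hS] at hle
  have : 1 ≤ Dk.card := Nat.one_le_iff_ne_zero.mpr (Finset.card_ne_zero_of_mem hne.choose_spec)
  omega


lemma rep (hm : 0 < m) (hsym : ∀ k, T (k + m) = fun e => ! T k e) (j : ℕ) :
    ∃ j', j' < 2*m ∧ T j' = T j := by
  induction j using Nat.strong_induction_on with
  | _ j ih =>
    by_cases h : j < 2*m
    · exact ⟨j, h, rfl⟩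
    · obtain ⟨j', h1, h2⟩ := ih (j - 2*m) (by omega)
      refine ⟨j', h1, ?_⟩
      rw [h2]
      conv_rhs => rw [show j = (j - 2*m) + 2*m by omega]
      rw [periodT T hsym]

lemma dominate (hm : 0 < m) (hsym : ∀ k, T (k + m) = fun e => ! T k e)
    (hstep : ∀ k, (sep (T k) (T (k + 1))).card = 1) {k : ℕ} (h : MaxPos T k) :
    ∀ dd, 1 ≤ dd → dd < 2*m → ∃ e, T k e = true ∧ T (k + dd) e = false := by
  intro dd h1 h2
  obtain ⟨hdn, hup⟩ := h
  rcases le_or_gt dd m with hdm | hdm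
  · obtain ⟨a, ha1, ha2⟩ := hdn
    refine ⟨a, ha1, ?_⟩
    have hflip : T k a ≠ T (k+1) a := by rw [ha1, ha2]; simp
    rw [value_const_window T hm hsym hstep hflip (k+dd) (by omega) (by omega), ha2]
  · obtain ⟨b, hb1, hb2⟩ := hup
    have hflip : T (k+(2*m-1)) b ≠ T (k+(2*m-1)+1) b := by rw [hb1, hb2]; simp
    have hwin : ∀ x, k+(2*m-1)+1 ≤ x → x ≤ k+(2*m-1)+m → T x b = true := by
      intro x hx1 hx2
      rw [value_const_window T hm hsym hstep hflip x hx1 hx2, hb2]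
    have hkb : T k b = true := by
      have hx := hwin (k + 2*m) (by omega) (by omega)
      rwa [periodT T hsym k] at hx
    refine ⟨b, hkb, ?_⟩
    have h4 : T (k + dd + m) b = true := hwin (k + dd + m) (by omega) (by omega)
    have h5 := congrFun (hsym (k + dd)) b
    rw [h4] at h5
    cases hv : T (k + dd) b
    · rfl
    · rw [hv] at h5; simp at h5

lemma injT (hm : 0 < m) (hsym : ∀ k, T (k + m) = fun e => ! T k e)
    (hstep : ∀ k, (sep (T k) (T (k + 1))).card = 1) :
    ∀ i j, i < 2*m → j < 2*m → T i = T j → i = j := by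
  suffices H : ∀ i j, i < j → j < 2*m → T i ≠ T j by
    intro i j hi hj heq
    rcases lt_trichotomy i j with h | h | h
    · exact absurd heq (H i j h hj)
    · exact h
    · exact absurd heq.symm (H j i h hi)
  intro i j hij hj heq
  obtain ⟨a, ha⟩ := flip_exists T hstep i
  rcases le_or_gt (j - i) m with hd | hd
  · have hwin := value_const_window T hm hsym hstep ha j (by omega) (by omega)
    exact ha ((congrFun heq a).trans hwin)
  · obtain ⟨b, hb⟩ := flip_exists T hstep j
    have hwin := value_const_window T hm hsym hstep hb (i + 2*m) (by omega) (by omega)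
    have p := congrFun (periodT T hsym i) b
    exact hb ((congrFun heq b).symm.trans (p.symm.trans hwin))

lemma mem_maxPlus_iff (hm : 0 < m) (hsym : ∀ k, T (k + m) = fun e => ! T k e)
    (hstep : ∀ k, (sep (T k) (T (k + 1))).card = 1) (k : ℕ) (hk : k < 2*m) :
    T k ∈ maxPlus ((Finset.range (2*m)).image T) ↔ MaxPos T k := by
  rw [maxPlus, Finset.mem_filter]
  constructor
  · rintro ⟨hv, hmax⟩
    constructor
    · -- Dn
      obtain ⟨j', hj', hTj'⟩ := rep T hm hsym (k+1)
      have hY : T (k+1) ∈ (Finset.range (2*m)).image T := by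
        rw [← hTj']
        exact Finset.mem_image.mpr ⟨j', Finset.mem_range.mpr hj', rfl⟩
      have hnss := hmax _ hY
      have hne : T k ≠ T (k+1) := by
        obtain ⟨e, he⟩ := flip_exists T hstep k
        intro hcon; exact he (congrFun hcon e)
      have hppne : _root_.posPart (T k) ≠ _root_.posPart (T (k+1)) := fun hcon => hne (posPart_inj hcon)
      have hnsub : ¬ _root_.posPart (T k) ⊆ _root_.posPart (T (k+1)) := by
        intro hsub
        exact hnss (Finset.ssubset_iff_subset_ne.mpr ⟨hsub, hppne⟩)
      obtain ⟨e, he1, he2⟩ := Finset.not_subset.mp hnsub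
      rw [mem_posPart] at he1 he2
      exact ⟨e, he1, by revert he2; cases T (k+1) e <;> simp⟩
    · -- Up
      set j := k + (2*m - 1) with hjdef
      have hj1 : T (j + 1) = T k := by
        rw [show j + 1 = k + 2*m by omega, periodT T hsym]
      obtain ⟨j', hj', hTj'⟩ := rep T hm hsym j
      have hY : T j ∈ (Finset.range (2*m)).image T := by
        rw [← hTj']
        exact Finset.mem_image.mpr ⟨j', Finset.mem_range.mpr hj', rfl⟩
      have hnss := hmax _ hY
      have hne : T k ≠ T j := by
        obtain ⟨e, he⟩ := flip_exists T hstep j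
        intro hcon
        rw [hj1] at he
        exact he (congrFun hcon.symm e)
      have hppne : _root_.posPart (T k) ≠ _root_.posPart (T j) := fun hcon => hne (posPart_inj hcon)
      have hnsub : ¬ _root_.posPart (T k) ⊆ _root_.posPart (T j) := by
        intro hsub
        exact hnss (Finset.ssubset_iff_subset_ne.mpr ⟨hsub, hppne⟩)
      obtain ⟨e, he1, he2⟩ := Finset.not_subset.mp hnsub
      rw [mem_posPart] at he1 he2
      refine ⟨e, by revert he2; cases T j e <;> simp, ?_⟩
      rw [hj1]; exact he1
  · intro hmp
    refine ⟨Finset.mem_image.mpr ⟨k, Finset.mem_range.mpr hk, rfl⟩, ?_⟩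
    intro Y hY
    obtain ⟨j, hjr, rfl⟩ := Finset.mem_image.mp hY
    rw [Finset.mem_range] at hjr
    by_cases heq : T j = T k
    · rw [heq]
      exact fun hss => (lt_irrefl _ hss)
    · have hd : ∃ dd, 1 ≤ dd ∧ dd < 2*m ∧ T (k + dd) = T j := by
        rcases lt_trichotomy j k with h | h | h
        · refine ⟨j + 2*m - k, by omega, by omega, ?_⟩
          rw [show k + (j + 2*m - k) = j + 2*m by omega, periodT T hsym]
        · exact absurd (by rw [h]) heq
        · exact ⟨j - k, by omega, by omega, by rw [show k + (j - k) = j by omega]⟩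
      obtain ⟨dd, hd1, hd2, hd3⟩ := hd
      obtain ⟨e, he1, he2⟩ := dominate T hm hsym hstep hmp dd hd1 hd2
      intro hss
      have hmem := hss.subset (mem_posPart.mpr he1)
      rw [mem_posPart] at hmem
      rw [← hd3, he2] at hmem
      exact absurd hmem (by simp)


lemma chi_sum (s : Finset ℕ) (e : Fin m) :
    ∑ k ∈ s, chi T k e = ((s.filter (fun k => T k e = true)).card : ℤ)
      - ((s.filter (fun k => ¬ (T k e = true))).card : ℤ) := by
  rw [← Finset.sum_filter_add_sum_filter_not s (fun k => T k e = true)]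
  have h1 : ∑ k ∈ s.filter (fun k => T k e = true), chi T k e
      = ((s.filter (fun k => T k e = true)).card : ℤ) := by
    rw [Finset.sum_congr rfl (fun k hk => ?_), Finset.sum_const, nsmul_eq_mul, mul_one]
    unfold chi
    rw [if_pos (Finset.mem_filter.mp hk).2]
  have h2 : ∑ k ∈ s.filter (fun k => ¬ (T k e = true)), chi T k e
      = -((s.filter (fun k => ¬ (T k e = true))).card : ℤ) := by
    rw [Finset.sum_congr rfl (fun k hk => ?_), Finset.sum_const, nsmul_eq_mul, mul_neg_one]
    unfold chi
    rw [if_neg (Finset.mem_filter.mp hk).2]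
  rw [h1, h2]
  ring

lemma sum_f_filter (g : ℕ → ℤ) :
    ∑ i ∈ Finset.range (2*m), f T i * g i
      = ∑ k ∈ (Finset.range (2*m)).filter (fun k => MaxPos T k), g k := by
  rw [Finset.sum_filter]
  apply Finset.sum_congr rfl
  intro i _
  unfold f
  split <;> simp

end Cycle
end S11

lemma final_arith : ∀ pK qK pD qD cQf cMf cDf cQ cM cD cKS cDK : ℕ,
    (1:ℤ) ≤ (pD:ℤ) - (qD:ℤ) →
    cD = cDK → cDf = pD → pD + qD = cDK →
    cQf = cMf - cDf → cQ = cM - cD → cD ≤ cM →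
    pD ≤ pK → cQ < cQf * 2 →
    ((pK:ℤ) - (qK:ℤ) = 1) → pK + qK = cKS → cMf = pK → cM = cKS → False := by
  intro pK qK pD qD cQf cMf cDf cQ cM cD cKS cDK
  intros; omega

open S11 in
theorem stmt_11 {m : ℕ} (hm : 0 < m) (T : ℕ → SV m)
    (hsym : ∀ k, T (k + m) = fun e => ! T k e)
    (hstep : ∀ k, (sep (T k) (T (k + 1))).card = 1)
    (hplus : ∀ k < 2 * m, T k ≠ fun _ => true) :
    isCommitteeB (maxPlus ((Finset.range (2 * m)).image T)) ∧
      ∀ Q ⊂ maxPlus ((Finset.range (2 * m)).image T), ¬ isCommitteeB Q := by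
  classical
  set V : Finset (SV m) := (Finset.range (2*m)).image T with hV
  set M : Finset (SV m) := maxPlus V with hM
  set KS : Finset ℕ := (Finset.range (2*m)).filter (fun k => MaxPos T k) with hKS
  have hinj : Set.InjOn T ↑(Finset.range (2*m)) := by
    intro i hi j hj hij
    exact injT T hm hsym hstep i j (by simpa using hi) (by simpa using hj) hij
  have hMeq : M = KS.image T := by
    ext X
    constructor
    · intro hX
      have hXV : X ∈ V := by have h' := hX; rw [hM, maxPlus] at h'; exact (Finset.mem_filter.mp h').1
      obtain ⟨k, hkr, rfl⟩ := Finset.mem_image.mp hXV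
      rw [Finset.mem_range] at hkr
      have := (mem_maxPlus_iff T hm hsym hstep k hkr).mp hX
      exact Finset.mem_image.mpr ⟨k, Finset.mem_filter.mpr ⟨Finset.mem_range.mpr hkr, this⟩, rfl⟩
    · intro hX
      obtain ⟨k, hk, rfl⟩ := Finset.mem_image.mp hX
      obtain ⟨hkr, hmp⟩ := Finset.mem_filter.mp hk
      rw [Finset.mem_range] at hkr
      exact (mem_maxPlus_iff T hm hsym hstep k hkr).mpr hmp
  -- generic transfer of filtered cards
  have htrans : ∀ (P : SV m → Prop) [DecidablePred P] (s : Finset ℕ), s ⊆ Finset.range (2*m) →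
      ((s.image T).filter P).card = (s.filter (fun k => P (T k))).card := by
    intro P _ s hs
    have himg : (s.image T).filter P = (s.filter (fun k => P (T k))).image T := by
      ext X
      simp only [Finset.mem_filter, Finset.mem_image]
      constructor
      · rintro ⟨⟨k, hk, rfl⟩, hPX⟩
        exact ⟨k, ⟨hk, hPX⟩, rfl⟩
      · rintro ⟨k, ⟨hk, hPX⟩, rfl⟩
        exact ⟨⟨k, hk, rfl⟩, hPX⟩
    rw [himg, Finset.card_image_of_injOn (hinj.mono (by
      intro x hx
      simp only [Finset.coe_filter, Set.mem_setOf_eq] at hx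
      exact hs hx.1))]
  have hKSsub : KS ⊆ Finset.range (2*m) := Finset.filter_subset _ _
  -- counts at each coordinate over KS
  have hcount : ∀ e : Fin m,
      ((KS.filter (fun k => T k e = true)).card : ℤ)
        - ((KS.filter (fun k => ¬ (T k e = true))).card : ℤ) = 1 := by
    intro e
    have h1 := fact1 T hm hsym hstep e
    rw [sum_f_filter T (fun i => chi T i e), ← hKS, chi_sum T KS e] at h1
    exact h1
  have hMcard : M.card = KS.card := by
    rw [hMeq, Finset.card_image_of_injOn (hinj.mono (by exact_mod_cast hKSsub))]
  have hMfilter : ∀ e : Fin m,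
      (M.filter (fun X => X e = true)).card = (KS.filter (fun k => T k e = true)).card := by
    intro e
    rw [hMeq, htrans (fun X => X e = true) KS hKSsub]
  have hsplit : ∀ e : Fin m,
      (KS.filter (fun k => T k e = true)).card
        + (KS.filter (fun k => ¬ (T k e = true))).card = KS.card := by
    intro e
    exact Finset.card_filter_add_card_filter_not _
  constructor
  · -- committee
    intro e
    have h1 := hcount e
    have h2 := hsplit e
    have h3 : 2 * (KS.filter (fun k => T k e = true)).card = KS.card + 1 := by omega
    rw [hMfilter e, hMcard]
    rw [div_lt_iff₀ (by norm_num : (0:ℚ) < 2)]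
    have : ((KS.card : ℚ) + 1) = 2 * ((KS.filter (fun k => T k e = true)).card : ℚ) := by
      exact_mod_cast h3.symm
    nlinarith [this]
  · -- minimality
    intro Q hQ hcom
    have hQsub : Q ⊆ M := hQ.subset
    set Dset : Finset (SV m) := M \ Q with hDset
    have hDne : Dset.Nonempty := by
      obtain ⟨x, hxM, hxQ⟩ := Finset.exists_of_ssubset hQ
      exact ⟨x, Finset.mem_sdiff.mpr ⟨hxM, hxQ⟩⟩
    set DK : Finset ℕ := KS.filter (fun k => T k ∈ Dset) with hDK
    have hDKsub : DK ⊆ Finset.range (2*m) := (Finset.filter_subset _ _).trans hKSsub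
    have hDimg : Dset = DK.image T := by
      have hDM : Dset ⊆ M := Finset.sdiff_subset
      ext X
      constructor
      · intro hX
        obtain ⟨k, hk, rfl⟩ := Finset.mem_image.mp (hMeq ▸ hDM hX)
        exact Finset.mem_image.mpr ⟨k, Finset.mem_filter.mpr ⟨hk, hX⟩, rfl⟩
      · intro hX
        obtain ⟨k, hk, rfl⟩ := Finset.mem_image.mp hX
        exact (Finset.mem_filter.mp hk).2
    have hDKne : DK.Nonempty := by
      obtain ⟨x, hx⟩ := hDne
      obtain ⟨k, hk, rfl⟩ := Finset.mem_image.mp (hDimg ▸ hx)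
      exact ⟨k, hk⟩
    obtain ⟨e, he⟩ := fact2 T hm hsym hstep DK (by
      intro k hk
      have h1 := Finset.mem_filter.mp ((Finset.filter_subset _ _) hk)
      exact ⟨h1.2, le_of_lt (by simpa using hDKsub hk)⟩) hDKne
    rw [chi_sum T DK e] at he
    -- cards
    have hDcard : Dset.card = DK.card := by
      rw [hDimg, Finset.card_image_of_injOn (hinj.mono (by exact_mod_cast hDKsub))]
    have hDfilter : (Dset.filter (fun X => X e = true)).card
        = (DK.filter (fun k => T k e = true)).card := by
      rw [hDimg, htrans (fun X => X e = true) DK hDKsub]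
    have hDsplit : (DK.filter (fun k => T k e = true)).card
        + (DK.filter (fun k => ¬ (T k e = true))).card = DK.card :=
      Finset.card_filter_add_card_filter_not _
    have hQeq : Q = M \ Dset := by
      ext X
      simp only [hDset, Finset.mem_sdiff, not_and, not_not]
      constructor
      · intro hX; exact ⟨hQsub hX, fun _ => hX⟩
      · rintro ⟨hXM, h2⟩; exact h2 hXM
    have hQfilter : (Q.filter (fun X => X e = true)).card
        = (M.filter (fun X => X e = true)).card - (Dset.filter (fun X => X e = true)).card := by
      rw [hQeq]
      rw [show (M \ Dset).filter (fun X => X e = true)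
          = M.filter (fun X => X e = true) \ Dset.filter (fun X => X e = true) by
        ext X; simp only [Finset.mem_filter, Finset.mem_sdiff]; tauto]
      exact Finset.card_sdiff_of_subset (Finset.filter_subset_filter _ Finset.sdiff_subset)
    have hQcard : Q.card = M.card - Dset.card := by
      rw [hQeq]
      exact Finset.card_sdiff_of_subset Finset.sdiff_subset
    have hDsubcard : Dset.card ≤ M.card := Finset.card_le_card Finset.sdiff_subset
    have hpDle : (DK.filter (fun k => T k e = true)).card
        ≤ (KS.filter (fun k => T k e = true)).card :=
      Finset.card_le_card (Finset.filter_subset_filter _ (Finset.filter_subset _ _))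
    -- committee inequality at e
    have hce := hcom e
    rw [div_lt_iff₀ (by norm_num : (0:ℚ) < 2)] at hce
    have hceN : Q.card < (Q.filter (fun X => X e = true)).card * 2 := by exact_mod_cast hce
    have h1 := hcount e
    have h2 := hsplit e
    have h3 := hMfilter e
    exact final_arith _ _ _ _ _ _ _ _ _ _ _ _ he hDcard hDfilter hDsplit hQfilter hQcard hDsubcard hpDle hceN h1 h2 h3 hMcard
end
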